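/- Let t, θ > 0. Then ∫_0^{∞} z · 4θ e^{2θ(z + θ t)} Φ(−2θ√t − z/√t) dz = √(2t/π) − 1/(2θ) + (e^{2θ² t}/θ) · Φ(−2θ√t). -/

import Mathlib

open MeasureTheory Real Set Filter intervalIntegral
open scoped Topology

/-- The standard normal cumulative distribution function. -/
noncomputable def stdNormalCdf (x : ℝ) : ℝ :=
  (Real.sqrt (2 * Real.pi))⁻¹ * ∫ u in Set.Iic x, Real.exp (-u^2 / 2)

lemma gauss_cont : Continuous fun u : ℝ => Real.exp (-u^2 / 2) := by
  continuity

lemma gauss_int : Integrable fun u : ℝ => Real.exp (-u^2 / 2) := by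
  have := integrable_exp_neg_mul_sq (show (0:ℝ) < 1/2 by norm_num)
  refine this.congr ?_
  filter_upwards with u
  congr 1; ring

lemma gauss_total : ∫ u : ℝ, Real.exp (-u^2 / 2) = Real.sqrt (2 * Real.pi) := by
  have h := integral_gaussian (1/2)
  rw [show π / (1/2 : ℝ) = 2 * π by ring] at h
  rw [← h]
  congr 1 with u
  congr 1; ring

lemma sqrt2pi_pos : 0 < Real.sqrt (2 * Real.pi) :=
  Real.sqrt_pos.mpr (by positivity)

lemma hasDerivAt_stdNormalCdf (x : ℝ) :
    HasDerivAt stdNormalCdf ((Real.sqrt (2 * Real.pi))⁻¹ * Real.exp (-x^2 / 2)) x := by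
  have key : ∀ y : ℝ, stdNormalCdf y
      = stdNormalCdf 0 + (Real.sqrt (2 * Real.pi))⁻¹ * ∫ u in (0:ℝ)..y, Real.exp (-u^2 / 2) := by
    intro y
    unfold stdNormalCdf
    rw [← intervalIntegral.integral_Iic_sub_Iic gauss_int.integrableOn gauss_int.integrableOn]
    ring
  have h1 : HasDerivAt (fun y : ℝ => ∫ u in (0:ℝ)..y, Real.exp (-u^2 / 2))
      (Real.exp (-x^2 / 2)) x :=
    intervalIntegral.integral_hasDerivAt_right (gauss_cont.intervalIntegrable _ _)
      (gauss_cont.stronglyMeasurableAtFilter _ _) gauss_cont.continuousAt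
  have h2 := (h1.const_mul ((Real.sqrt (2 * Real.pi))⁻¹)).const_add (stdNormalCdf 0)
  exact h2.congr_of_eventuallyEq (Filter.Eventually.of_forall key)

lemma stdNormalCdf_cont : Continuous stdNormalCdf :=
  continuous_iff_continuousAt.2 fun x => (hasDerivAt_stdNormalCdf x).continuousAt

lemma stdNormalCdf_nonneg (x : ℝ) : 0 ≤ stdNormalCdf x :=
  mul_nonneg (by positivity) (setIntegral_nonneg measurableSet_Iic fun u _ => (Real.exp_pos _).le)

lemma stdNormalCdf_neg (x : ℝ) : stdNormalCdf (-x) = 1 - stdNormalCdf x := by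
  have hA : (∫ u in Iic (-x), Real.exp (-u^2 / 2)) = ∫ u in Ioi x, Real.exp (-u^2 / 2) := by
    have := integral_comp_neg_Iic (-x) (fun u => Real.exp (-u^2 / 2))
    simp only [neg_sq, neg_neg] at this
    exact this
  have hB : (∫ u in Iic x, Real.exp (-u^2 / 2)) + ∫ u in Ioi x, Real.exp (-u^2 / 2)
      = Real.sqrt (2 * Real.pi) := by
    rw [intervalIntegral.integral_Iic_add_Ioi gauss_int.integrableOn gauss_int.integrableOn]
    exact gauss_total
  unfold stdNormalCdf
  rw [hA]
  have h2 := sqrt2pi_pos.ne'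
  have h3 : (∫ u in Ioi x, Real.exp (-u^2 / 2))
      = Real.sqrt (2 * Real.pi) - ∫ u in Iic x, Real.exp (-u^2 / 2) := by linarith
  rw [h3, mul_sub, inv_mul_cancel₀ h2]

lemma stdNormalCdf_zero : stdNormalCdf 0 = 1/2 := by
  have := stdNormalCdf_neg 0
  rw [neg_zero] at this
  linarith

lemma stdNormalCdf_le_one (x : ℝ) : stdNormalCdf x ≤ 1 := by
  have := stdNormalCdf_neg (-x)
  rw [neg_neg] at this
  have := stdNormalCdf_nonneg (-x)
  linarith [stdNormalCdf_neg x, stdNormalCdf_nonneg (-x)]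

lemma integrableOn_exp_mul_Iic' {b : ℝ} (hb : 0 < b) (c : ℝ) :
    IntegrableOn (fun u : ℝ => Real.exp (b * u)) (Iic c) := by
  refine integrableOn_Iic_of_intervalIntegral_norm_bounded (Real.exp (b*c)/b) c
    (fun y => ((Real.continuous_exp.comp (continuous_const.mul continuous_id)).integrableOn_Ioc))
    tendsto_id ?_
  filter_upwards with y
  have hd : ∀ x ∈ Set.uIcc y c, HasDerivAt (fun u : ℝ => Real.exp (b*u)/b)
      (Real.exp (b*x)) x := by
    intro x _
    have h := (((hasDerivAt_id x).const_mul b).exp).div_const b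
    simpa [mul_comm, hb.ne'] using h
  have hi : IntervalIntegrable (fun x : ℝ => Real.exp (b*x)) volume y c :=
    (Real.continuous_exp.comp (continuous_const.mul continuous_id)).intervalIntegrable _ _
  have hval := intervalIntegral.integral_eq_sub_of_hasDerivAt hd hi
  simp only [Real.norm_eq_abs, abs_of_pos (Real.exp_pos _)]
  simp only [id] 
  rw [hval]
  have := (Real.exp_pos (b*y)).le
  have hbpos := hb
  rw [div_sub_div_same]
  gcongr
  simp [this]

lemma integral_exp_mul_Iic' {b : ℝ} (hb : 0 < b) (c : ℝ) :
    ∫ u in Iic c, Real.exp (b * u) = Real.exp (b * c) / b := by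
  have hd : ∀ x ∈ Set.Iic c, HasDerivAt (fun u : ℝ => Real.exp (b*u)/b)
      (Real.exp (b*x)) x := by
    intro x _
    have h := (((hasDerivAt_id x).const_mul b).exp).div_const b
    simpa [mul_comm, hb.ne'] using h
  have hlim : Tendsto (fun u : ℝ => Real.exp (b*u)/b) atBot (𝓝 0) := by
    have h1 : Tendsto (fun u : ℝ => b * u) atBot atBot :=
      (tendsto_id (α := ℝ)).const_mul_atBot hb
    have := (Real.tendsto_exp_atBot.comp h1).div_const b
    simpa using this
  have := integral_Iic_of_hasDerivAt_of_tendsto' hd (integrableOn_exp_mul_Iic' hb c) hlim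
  simpa using this

lemma mills {x : ℝ} (hx : 0 < x) :
    stdNormalCdf (-x) ≤ Real.exp (-x^2 / 2) / (Real.sqrt (2 * Real.pi) * x) := by
  have hmono : (∫ u in Iic (-x), Real.exp (-u^2 / 2))
      ≤ ∫ u in Iic (-x), Real.exp (x^2/2) * Real.exp (x * u) := by
    refine setIntegral_mono_on gauss_int.integrableOn
      ((integrableOn_exp_mul_Iic' hx (-x)).const_mul _) measurableSet_Iic ?_
    intro u _
    rw [← Real.exp_add]
    apply Real.exp_le_exp.2
    nlinarith [sq_nonneg (u + x)]
  have hval : (∫ u in Iic (-x), Real.exp (x^2/2) * Real.exp (x * u))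
      = Real.exp (-x^2 / 2) / x := by
    rw [MeasureTheory.integral_const_mul, integral_exp_mul_Iic' hx,
      ← mul_div_assoc, ← Real.exp_add]
    congr 2
    ring
  unfold stdNormalCdf
  have h1 : (Real.sqrt (2*Real.pi))⁻¹ * (∫ u in Iic (-x), Real.exp (-u^2/2))
      ≤ (Real.sqrt (2*Real.pi))⁻¹ * (Real.exp (-x^2/2)/x) := by
    apply mul_le_mul_of_nonneg_left _ (by positivity)
    rw [← hval]; exact hmono
  refine h1.trans_eq ?_
  rw [eq_comm, div_eq_mul_inv, mul_inv, div_eq_mul_inv]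
  ring

lemma tendsto_stdNormalCdf_neg : Tendsto (fun y : ℝ => stdNormalCdf (-y)) atTop (𝓝 0) := by
  apply squeeze_zero' (Filter.Eventually.of_forall fun y => stdNormalCdf_nonneg _)
    (g := fun y : ℝ => y⁻¹) ?_ tendsto_inv_atTop_zero
  filter_upwards [eventually_ge_atTop (1:ℝ)] with y hy
  have hy0 : (0:ℝ) < y := lt_of_lt_of_le one_pos hy
  have hsq1 : (1:ℝ) ≤ Real.sqrt (2 * Real.pi) := by
    rw [show (1:ℝ) = Real.sqrt 1 from (Real.sqrt_one).symm]
    apply Real.sqrt_le_sqrt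
    nlinarith [Real.pi_gt_three]
  have hexp : Real.exp (-y^2/2) ≤ 1 := Real.exp_le_one_iff.2 (by nlinarith)
  have hden : y ≤ Real.sqrt (2 * Real.pi) * y := le_mul_of_one_le_left hy0.le hsq1
  calc stdNormalCdf (-y) ≤ Real.exp (-y^2/2) / (Real.sqrt (2 * Real.pi) * y) := mills hy0
    _ ≤ 1 / y := div_le_div₀ zero_le_one hexp hy0 hden
    _ = y⁻¹ := one_div y

lemma tendsto_stdNormalCdf_atTop : Tendsto stdNormalCdf atTop (𝓝 1) := by
  have h : ∀ y : ℝ, stdNormalCdf y = 1 - stdNormalCdf (-y) := by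
    intro y; have := stdNormalCdf_neg y; linarith
  rw [show (1:ℝ) = 1 - 0 by ring]
  exact Tendsto.congr (fun y => (h y).symm) (tendsto_const_nhds.sub tendsto_stdNormalCdf_neg)

lemma tendsto_mul_exp_neg_sq {b : ℝ} (hb : 0 < b) :
    Tendsto (fun z : ℝ => z * Real.exp (-b * z^2)) atTop (𝓝 0) := by
  have h0 : Tendsto (fun z : ℝ => z * Real.exp (-z)) atTop (𝓝 0) := by
    simpa using Real.tendsto_pow_mul_exp_neg_atTop_nhds_zero 1
  apply squeeze_zero' ?_ ?_ h0
  · filter_upwards [eventually_ge_atTop (0:ℝ)] with z hz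
    positivity
  · filter_upwards [eventually_ge_atTop (max 1 (1/b))] with z hz
    have hz1 : (1:ℝ) ≤ z := le_trans (le_max_left _ _) hz
    have hzb : 1/b ≤ z := le_trans (le_max_right _ _) hz
    have : z ≤ b * z^2 := by
      have : 1 ≤ b * z := by
        rw [div_le_iff₀ hb] at hzb; linarith [hzb]
      nlinarith
    have h1 : Real.exp (-b*z^2) ≤ Real.exp (-z) := Real.exp_le_exp.2 (by nlinarith)
    have hz0 : (0:ℝ) ≤ z := by linarith
    exact mul_le_mul_of_nonneg_left h1 hz0

theorem slowly_reflected_bm_mean (t θ : ℝ) (ht : 0 < t) (hθ : 0 < θ) :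
    ∫ z in Set.Ioi (0 : ℝ),
        z * (4 * θ * Real.exp (2 * θ * (z + θ * t)) *
          stdNormalCdf (-2 * θ * Real.sqrt t - z / Real.sqrt t))
      = Real.sqrt (2 * t / Real.pi) - 1 / (2 * θ)
        + (Real.exp (2 * θ^2 * t) / θ) * stdNormalCdf (-2 * θ * Real.sqrt t) := by
  have hs0 : 0 < Real.sqrt t := Real.sqrt_pos.mpr ht
  set s := Real.sqrt t with hs
  have hst : s^2 = t := Real.sq_sqrt ht.le
  have hsne : s ≠ 0 := hs0.ne'
  -- key exponential identities
  have key1 : ∀ z : ℝ, Real.exp (2*θ*z + 2*θ^2*t) * Real.exp (-(2*θ*s + z/s)^2 / 2)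
      = Real.exp (-(1/(2*t)) * z^2) := by
    intro z
    rw [← Real.exp_add]
    congr 1
    rw [← hst]
    field_simp
    ring
  have key2 : ∀ z : ℝ, (-(z/s)^2/2 : ℝ) = -(1/(2*t)) * z^2 := by
    intro z
    rw [← hst]
    field_simp
  -- pointwise bound via Mills
  have hΦb : ∀ z : ℝ, 0 < z → Real.exp (2*θ*z + 2*θ^2*t) * stdNormalCdf (-2*θ*s - z/s)
      ≤ (Real.sqrt (2*Real.pi) * (2*θ*s))⁻¹ * Real.exp (-(1/(2*t)) * z^2) := by
    intro z hz
    have hx : 0 < 2*θ*s + z/s := by positivity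
    have harg : (-2*θ*s - z/s : ℝ) = -(2*θ*s + z/s) := by ring
    calc Real.exp (2*θ*z + 2*θ^2*t) * stdNormalCdf (-2*θ*s - z/s)
        ≤ Real.exp (2*θ*z + 2*θ^2*t)
            * (Real.exp (-(2*θ*s + z/s)^2 / 2) / (Real.sqrt (2*Real.pi) * (2*θ*s + z/s))) := by
          rw [harg]
          exact mul_le_mul_of_nonneg_left (mills hx) (Real.exp_pos _).le
      _ ≤ Real.exp (2*θ*z + 2*θ^2*t)
            * (Real.exp (-(2*θ*s + z/s)^2 / 2) / (Real.sqrt (2*Real.pi) * (2*θ*s))) := by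
          apply mul_le_mul_of_nonneg_left _ (Real.exp_pos _).le
          apply div_le_div_of_nonneg_left (Real.exp_pos _).le (by positivity)
          have : 0 ≤ z/s := by positivity
          have h2 := sqrt2pi_pos
          nlinarith
      _ = (Real.sqrt (2*Real.pi) * (2*θ*s))⁻¹
            * (Real.exp (2*θ*z + 2*θ^2*t) * Real.exp (-(2*θ*s + z/s)^2 / 2)) := by
          rw [div_eq_mul_inv]; ring
      _ = (Real.sqrt (2*Real.pi) * (2*θ*s))⁻¹ * Real.exp (-(1/(2*t)) * z^2) := by
          rw [key1 z]
  -- derivative of the antiderivative G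
  have hG' : ∀ z : ℝ, HasDerivAt (fun z : ℝ =>
        (2*z - 1/θ) * Real.exp (2*θ*z + 2*θ^2*t) * stdNormalCdf (-2*θ*s - z/s)
        - 2*s * ((Real.sqrt (2*Real.pi))⁻¹ * Real.exp (-(z/s)^2/2))
        - 1/θ * stdNormalCdf (z/s))
      (z * (4 * θ * Real.exp (2 * θ * (z + θ * t)) * stdNormalCdf (-2 * θ * s - z / s))) z := by
    intro z
    have h1 : HasDerivAt (fun z : ℝ => 2*z - 1/θ) 2 z := by
      simpa using ((hasDerivAt_id z).const_mul 2).sub_const (1/θ)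
    have h2 : HasDerivAt (fun z : ℝ => Real.exp (2*θ*z + 2*θ^2*t))
        (Real.exp (2*θ*z + 2*θ^2*t) * (2*θ)) z := by
      have := (((hasDerivAt_id z).const_mul (2*θ)).add_const (2*θ^2*t)).exp
      simpa using this
    have h3i : HasDerivAt (fun z : ℝ => -2*θ*s - z/s) (-(1/s)) z := by
      have := ((hasDerivAt_id z).div_const s).const_sub (-2*θ*s)
      simpa [one_div] using this
    have h3 : HasDerivAt (fun z : ℝ => stdNormalCdf (-2*θ*s - z/s))
        ((Real.sqrt (2*Real.pi))⁻¹ * Real.exp (-(-2*θ*s - z/s)^2/2) * -(1/s)) z :=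
      (hasDerivAt_stdNormalCdf _).comp z h3i
    have h4i : HasDerivAt (fun z : ℝ => z/s) (1/s) z := (hasDerivAt_id z).div_const s
    have h4sq : HasDerivAt (fun z : ℝ => -(z/s)^2/2) (-((2:ℕ)*(z/s)^1*(1/s))/2) z :=
      ((h4i.pow 2).neg).div_const 2
    have h4 : HasDerivAt (fun z : ℝ => Real.exp (-(z/s)^2/2))
        (Real.exp (-(z/s)^2/2) * (-((2:ℕ)*(z/s)^1*(1/s))/2)) z := h4sq.exp
    have h5 : HasDerivAt (fun z : ℝ => stdNormalCdf (z/s))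
        ((Real.sqrt (2*Real.pi))⁻¹ * Real.exp (-(z/s)^2/2) * (1/s)) z :=
      (hasDerivAt_stdNormalCdf _).comp z h4i
    have hfull := (((h1.mul h2).mul h3).sub
      ((h4.const_mul ((Real.sqrt (2*Real.pi))⁻¹)).const_mul (2*s))).sub (h5.const_mul (1/θ))
    refine hfull.congr_deriv ?_
    symm
    simp only [Pi.mul_apply]
    rw [show (2:ℝ) * θ * (z + θ * t) = 2*θ*z + 2*θ^2*t by ring]
    rw [key2 z, show (-(-2*θ*s - z/s)^2/2 : ℝ) = -(2*θ*s + z/s)^2/2 by ring]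
    push_cast
    linear_combination ((2*z - 1/θ) * (Real.sqrt (2*Real.pi))⁻¹ * (1/s)) * key1 z
      + (2 * Real.exp (2*θ*z + 2*θ^2*t) * stdNormalCdf (-2*θ*s - z/s)) * mul_inv_cancel₀ hθ.ne'
      + (-(2*z*(Real.sqrt (2*Real.pi))⁻¹*s⁻¹*Real.exp (-(1/(2*t)) * z^2))) * mul_inv_cancel₀ hsne
  -- integrability of the integrand
  have hcontI : Continuous (fun z : ℝ =>
      z * (4 * θ * Real.exp (2 * θ * (z + θ * t)) * stdNormalCdf (-2 * θ * s - z / s))) := by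
    apply continuous_id.mul
    apply Continuous.mul
    · exact continuous_const.mul (Real.continuous_exp.comp (by continuity))
    · exact stdNormalCdf_cont.comp (by continuity)
  have hint : IntegrableOn (fun z : ℝ =>
      z * (4 * θ * Real.exp (2 * θ * (z + θ * t)) * stdNormalCdf (-2 * θ * s - z / s)))
      (Ioi (0:ℝ)) := by
    have hg : Integrable (fun z : ℝ =>
        4*θ*(Real.sqrt (2*Real.pi) * (2*θ*s))⁻¹ * (z * Real.exp (-(1/(2*t)) * z^2))) :=
      (integrable_mul_exp_neg_mul_sq (by positivity : (0:ℝ) < 1/(2*t))).const_mul _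
    refine Integrable.mono' hg.integrableOn hcontI.aestronglyMeasurable.restrict ?_
    rw [ae_restrict_iff' measurableSet_Ioi]
    refine ae_of_all _ fun z hz => ?_
    have hz0 : (0:ℝ) < z := hz
    have hΦ0 := stdNormalCdf_nonneg (-2*θ*s - z/s)
    rw [Real.norm_eq_abs, abs_of_nonneg
      (mul_nonneg hz0.le (mul_nonneg (by positivity) hΦ0))]
    rw [show (2:ℝ) * θ * (z + θ * t) = 2*θ*z + 2*θ^2*t by ring]
    calc z * (4 * θ * Real.exp (2*θ*z + 2*θ^2*t) * stdNormalCdf (-2*θ*s - z/s))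
        = z * (4*θ*(Real.exp (2*θ*z + 2*θ^2*t) * stdNormalCdf (-2*θ*s - z/s))) := by ring
      _ ≤ z * (4*θ*((Real.sqrt (2*Real.pi) * (2*θ*s))⁻¹ * Real.exp (-(1/(2*t)) * z^2))) := by
          apply mul_le_mul_of_nonneg_left _ hz0.le
          exact mul_le_mul_of_nonneg_left (hΦb z hz0) (by positivity)
      _ = 4*θ*(Real.sqrt (2*Real.pi) * (2*θ*s))⁻¹ * (z * Real.exp (-(1/(2*t)) * z^2)) := by
          ring
  -- limit of G at infinity
  have hW : Tendsto (fun z : ℝ => Real.exp (-(1/(2*t)) * z^2)) atTop (𝓝 0) := by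
    apply Real.tendsto_exp_atBot.comp
    exact (tendsto_pow_atTop two_ne_zero).const_mul_atTop_of_neg
      (neg_neg_iff_pos.2 (by positivity : (0:ℝ) < 1/(2*t)))
  have hT1 : Tendsto (fun z : ℝ =>
      (2*z - 1/θ) * Real.exp (2*θ*z + 2*θ^2*t) * stdNormalCdf (-2*θ*s - z/s)) atTop (𝓝 0) := by
    have hg : Tendsto (fun z : ℝ =>
        2*(Real.sqrt (2*Real.pi) * (2*θ*s))⁻¹ * (z * Real.exp (-(1/(2*t)) * z^2))) atTop (𝓝 0) := by
      have := (tendsto_mul_exp_neg_sq (by positivity : (0:ℝ) < 1/(2*t))).const_mul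
        (2*(Real.sqrt (2*Real.pi) * (2*θ*s))⁻¹)
      simpa using this
    apply squeeze_zero' ?_ ?_ hg
    · filter_upwards [eventually_ge_atTop (1/(2*θ))] with z hz
      have h1 : (0:ℝ) ≤ 2*z - 1/θ := by
        rw [div_le_iff₀ (by positivity : (0:ℝ) < 2*θ)] at hz
        rw [sub_nonneg, div_le_iff₀ hθ]
        linarith
      exact mul_nonneg (mul_nonneg h1 (Real.exp_pos _).le) (stdNormalCdf_nonneg _)
    · filter_upwards [eventually_ge_atTop (max (1/(2*θ)) 1)] with z hz
      have hz1 : (0:ℝ) < z := lt_of_lt_of_le one_pos (le_trans (le_max_right _ _) hz)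
      have hle1 : 2*z - 1/θ ≤ 2*z := by
        have : (0:ℝ) ≤ 1/θ := by positivity
        linarith
      have hnn2 : (0:ℝ) ≤ Real.exp (2*θ*z + 2*θ^2*t) * stdNormalCdf (-2*θ*s - z/s) :=
        mul_nonneg (Real.exp_pos _).le (stdNormalCdf_nonneg _)
      calc (2*z - 1/θ) * Real.exp (2*θ*z + 2*θ^2*t) * stdNormalCdf (-2*θ*s - z/s)
          = (2*z - 1/θ) * (Real.exp (2*θ*z + 2*θ^2*t) * stdNormalCdf (-2*θ*s - z/s)) := by
            ring
        _ ≤ (2*z) * ((Real.sqrt (2*Real.pi) * (2*θ*s))⁻¹ * Real.exp (-(1/(2*t)) * z^2)) :=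
            mul_le_mul hle1 (hΦb z hz1) hnn2 (by positivity)
        _ = 2*(Real.sqrt (2*Real.pi) * (2*θ*s))⁻¹ * (z * Real.exp (-(1/(2*t)) * z^2)) := by
            ring
  have hT2 : Tendsto (fun z : ℝ =>
      2*s * ((Real.sqrt (2*Real.pi))⁻¹ * Real.exp (-(z/s)^2/2))) atTop (𝓝 0) := by
    have h1 : Tendsto (fun z : ℝ => Real.exp (-(z/s)^2/2)) atTop (𝓝 0) :=
      Tendsto.congr (fun z => by rw [key2 z]) hW
    have := (h1.const_mul ((Real.sqrt (2*Real.pi))⁻¹)).const_mul (2*s)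
    simpa using this
  have hT3 : Tendsto (fun z : ℝ => 1/θ * stdNormalCdf (z/s)) atTop (𝓝 (1/θ)) := by
    have h := tendsto_stdNormalCdf_atTop.comp (Tendsto.atTop_div_const hs0 tendsto_id)
    have := h.const_mul (1/θ)
    simpa using this
  have hlim : Tendsto (fun z : ℝ =>
      (2*z - 1/θ) * Real.exp (2*θ*z + 2*θ^2*t) * stdNormalCdf (-2*θ*s - z/s)
      - 2*s * ((Real.sqrt (2*Real.pi))⁻¹ * Real.exp (-(z/s)^2/2))
      - 1/θ * stdNormalCdf (z/s)) atTop (𝓝 (-(1/θ))) := by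
    have := (hT1.sub hT2).sub hT3
    simpa using this
  have hfinal := integral_Ioi_of_hasDerivAt_of_tendsto' (fun z _ => hG' z) hint hlim
  rw [hfinal]
  -- evaluate G 0 and finish
  have hsqrt : Real.sqrt (2*t/Real.pi) = 2*s*(Real.sqrt (2*Real.pi))⁻¹ := by
    rw [show 2*t/Real.pi = (2*s*(Real.sqrt (2*Real.pi))⁻¹)^2 from ?_]
    · exact Real.sqrt_sq (by positivity)
    · rw [mul_pow, mul_pow, inv_pow, Real.sq_sqrt (by positivity : (0:ℝ) ≤ 2*Real.pi), hst]
      field_simp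
  rw [hsqrt]
  norm_num [stdNormalCdf_zero]
  field_simp
  ring
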